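/- arXiv:1912.09871 — 10 statements merged into one kernel-verified Lean document; each statement's English description precedes it below -/
import Mathlib

section
/- Let A be a real n×n matrix, ρ > 0 a real number, k̃ ≥ 1 a natural number with ‖A^{k̃}‖₂ ρ^{-k̃} < 1, and α ≥ 0 a real number. Then the exponential stability bound (for all x ∈ ℝⁿ and all k ∈ ℕ₀: |A^k x| ≤ α ρ^k |x|) holds if and only if α ≥ α_min, where α_min := max_{j ∈ {0,1,…,k̃−1}} ‖A^j‖₂ ρ^{-j}. -/
/-- The spectral norm of a real `n × n` matrix: the operator norm induced by
the Euclidean norm on `ℝⁿ`. -/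
noncomputable def specNorm {n : ℕ} (A : Matrix (Fin n) (Fin n) ℝ) : ℝ :=
  ‖(Matrix.toEuclideanCLM (𝕜 := ℝ) A : EuclideanSpace ℝ (Fin n) →L[ℝ] EuclideanSpace ℝ (Fin n))‖

set_option synthInstance.maxHeartbeats 1000000
set_option maxHeartbeats 2000000

lemma pow_apply_norm_le {n : ℕ} (S : EuclideanSpace ℝ (Fin n) →L[ℝ] EuclideanSpace ℝ (Fin n))
    (q : ℕ) (y : EuclideanSpace ℝ (Fin n)) : ‖(S ^ q) y‖ ≤ ‖S‖ ^ q * ‖y‖ := by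
  induction q with
  | zero => simp [pow_zero]
  | succ q ih =>
    have h1 : (S ^ (q + 1)) y = S ((S ^ q) y) := by
      rw [pow_succ']; rfl
    rw [h1]
    calc ‖S ((S ^ q) y)‖ ≤ ‖S‖ * ‖(S ^ q) y‖ := S.le_opNorm _
      _ ≤ ‖S‖ * (‖S‖ ^ q * ‖y‖) := by
          exact mul_le_mul_of_nonneg_left ih (norm_nonneg _)
      _ = ‖S‖ ^ (q + 1) * ‖y‖ := by ring

/-- With `ρ > 0`, `k̃ ≥ 1` such that `‖A^k̃‖₂ ρ^{-k̃} < 1`, and `α ≥ 0`, the exponential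
stability bound `|A^k x| ≤ α ρ^k |x|` (for all `x`, `k`) holds iff `α ≥ α_min`, where
`α_min = max_{j < k̃} ‖A^j‖₂ ρ^{-j}`. -/
theorem stmt2 {n : ℕ} (A : Matrix (Fin n) (Fin n) ℝ) (ρ : ℝ) (hρ : 0 < ρ)
    (ktil : ℕ) (hk : 1 ≤ ktil)
    (h : specNorm (A ^ ktil) * (ρ ^ ktil)⁻¹ < 1)
    (α : ℝ) (hα : 0 ≤ α) :
    (∀ (x : EuclideanSpace ℝ (Fin n)) (k : ℕ),
        ‖Matrix.toEuclideanCLM (𝕜 := ℝ) (A ^ k) x‖ ≤ α * ρ ^ k * ‖x‖) ↔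
      (Finset.range ktil).sup' (Finset.nonempty_range_iff.mpr (by omega))
        (fun j => specNorm (A ^ j) * (ρ ^ j)⁻¹) ≤ α := by
  set T : EuclideanSpace ℝ (Fin n) →L[ℝ] EuclideanSpace ℝ (Fin n) :=
    Matrix.toEuclideanCLM (𝕜 := ℝ) A with hT
  have hspec : ∀ j : ℕ, specNorm (A ^ j) = ‖T ^ j‖ := fun j => by
    simp [specNorm, hT, map_pow]
  have happ : ∀ (j : ℕ) (x : EuclideanSpace ℝ (Fin n)),
      Matrix.toEuclideanCLM (𝕜 := ℝ) (A ^ j) x = (T ^ j) x := fun j x => by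
    rw [hT, map_pow]
  have hρj : ∀ j : ℕ, (0:ℝ) < ρ ^ j := fun j => pow_pos hρ j
  -- from h : ‖T^ktil‖ ≤ ρ^ktil
  have hTk : ‖T ^ ktil‖ ≤ ρ ^ ktil := by
    rw [hspec, ← div_eq_mul_inv] at h
    exact le_of_lt ((div_lt_one (hρj ktil)).mp h)
  constructor
  · intro hb
    apply Finset.sup'_le
    intro j hj
    rw [hspec]
    have hle : ‖T ^ j‖ ≤ α * ρ ^ j := by
      apply ContinuousLinearMap.opNorm_le_bound _ (by positivity)
      intro x
      have := hb x j
      rw [happ] at this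
      linarith
    calc ‖T ^ j‖ * (ρ ^ j)⁻¹ ≤ (α * ρ ^ j) * (ρ ^ j)⁻¹ :=
          mul_le_mul_of_nonneg_right hle (by positivity)
      _ = α := by field_simp
  · intro hs x k
    rw [happ]
    have hbound : ∀ j ∈ Finset.range ktil, ‖T ^ j‖ ≤ α * ρ ^ j := by
      intro j hj
      have := Finset.le_sup' (fun j => specNorm (A ^ j) * (ρ ^ j)⁻¹) hj
      have h2 : specNorm (A ^ j) * (ρ ^ j)⁻¹ ≤ α := le_trans this hs
      rw [hspec] at h2
      calc ‖T ^ j‖ = ‖T ^ j‖ * (ρ ^ j)⁻¹ * ρ ^ j := by field_simp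
        _ ≤ α * ρ ^ j := mul_le_mul_of_nonneg_right h2 (le_of_lt (hρj j))
    obtain ⟨q, r, hr, hkeq⟩ : ∃ q r, r < ktil ∧ k = ktil * q + r :=
      ⟨k / ktil, k % ktil, Nat.mod_lt _ (by omega), by rw [Nat.div_add_mod]⟩
    subst hkeq
    have hsplit : (T ^ (ktil * q + r)) x = ((T ^ ktil) ^ q) ((T ^ r) x) := by
      rw [pow_add, pow_mul]; rfl
    rw [hsplit]
    calc ‖((T ^ ktil) ^ q) ((T ^ r) x)‖ ≤ ‖T ^ ktil‖ ^ q * ‖(T ^ r) x‖ :=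
          pow_apply_norm_le _ q _
      _ ≤ (ρ ^ ktil) ^ q * ‖(T ^ r) x‖ := by
          apply mul_le_mul_of_nonneg_right _ (norm_nonneg _)
          exact pow_le_pow_left₀ (norm_nonneg _) hTk q
      _ ≤ (ρ ^ ktil) ^ q * (‖T ^ r‖ * ‖x‖) := by
          exact mul_le_mul_of_nonneg_left ((T ^ r).le_opNorm x) (by positivity)
      _ ≤ (ρ ^ ktil) ^ q * ((α * ρ ^ r) * ‖x‖) := by
          apply mul_le_mul_of_nonneg_left _ (by positivity)
          exact mul_le_mul_of_nonneg_right (hbound r (Finset.mem_range.mpr hr)) (norm_nonneg _)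
      _ = α * ρ ^ (ktil * q + r) * ‖x‖ := by rw [pow_add, pow_mul]; ring
end

section
/- (Robustness-based abstraction for weak execution, linear case.) Let Σ be a set of execution modes containing a distinguished element 0, and for each σ ∈ Σ let A_σ be a real n×n matrix. Define γ_σ := ‖A_σ − A_0‖₂ (so γ_0 = 0). Suppose ρ ∈ (0,1) and α ≥ 1 satisfy |A_0^k x| ≤ α ρ^k |x| for all x ∈ ℝⁿ and k ∈ ℕ₀, and let β ≥ α. Then for every mode sequence σ : ℕ₀ → Σ, every disturbance w : ℕ₀ → ℝⁿ, and every x_0 ∈ ℝⁿ, the solution of x_{k+1} = A_{σ_k} x_k + w_k satisfies |x_k| ≤ v̄_k for all k ∈ ℕ₀, where v̄_0 = α |x_0| and v̄_{k+1} = (ρ + β γ_{σ_k}) v̄_k + β |w_k|. -/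
/-- Robustness-based abstraction for weak execution (linear case): with nominal mode `s0`,
`γ_σ = ‖A_σ − A_{s0}‖₂`, nominal exponential stability with `ρ ∈ (0,1)`, `α ≥ 1`, and
`β ≥ α`, every solution of `x_{k+1} = A_{σ_k} x_k + w_k` satisfies `|x_k| ≤ v̄_k`, where
`v̄_0 = α |x_0|` and `v̄_{k+1} = (ρ + β γ_{σ_k}) v̄_k + β |w_k|`. -/
theorem stmt5 {n : ℕ} {S : Type*} (s0 : S) (A : S → Matrix (Fin n) (Fin n) ℝ)
    (ρ α β : ℝ) (hρ0 : 0 < ρ) (hρ1 : ρ < 1) (hα : 1 ≤ α)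
    (hnom : ∀ (x : EuclideanSpace ℝ (Fin n)) (k : ℕ),
      ‖Matrix.toEuclideanCLM (𝕜 := ℝ) ((A s0) ^ k) x‖ ≤ α * ρ ^ k * ‖x‖)
    (hβ : α ≤ β)
    (σ : ℕ → S) (w x : ℕ → EuclideanSpace ℝ (Fin n))
    (hx : ∀ k, x (k + 1) = Matrix.toEuclideanCLM (𝕜 := ℝ) (A (σ k)) (x k) + w k)
    (v : ℕ → ℝ) (hv0 : v 0 = α * ‖x 0‖)
    (hv : ∀ k, v (k + 1) = (ρ + β * specNorm (A (σ k) - A s0)) * v k + β * ‖w k‖) :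
    ∀ k, ‖x k‖ ≤ v k := by
  classical
  set L : S → (EuclideanSpace ℝ (Fin n) →L[ℝ] EuclideanSpace ℝ (Fin n)) :=
    fun s => Matrix.toEuclideanCLM (𝕜 := ℝ) (A s) with hLdef
  have hγeq : ∀ s, specNorm (A s - A s0) = ‖L s - L s0‖ := by
    intro s
    simp only [specNorm, map_sub, hLdef]
  set γ : ℕ → ℝ := fun m => ‖L (σ m) - L s0‖ with hγdef
  have hγ0 : ∀ m, 0 ≤ γ m := fun m => norm_nonneg _
  set d : ℕ → EuclideanSpace ℝ (Fin n) := fun m => (L (σ m) - L s0) (x m) + w m with hddef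
  have hx' : ∀ k, x (k + 1) = (L s0) (x k) + d k := by
    intro k
    rw [hx k]
    simp only [hddef, ContinuousLinearMap.sub_apply, hLdef]
    abel
  have hpow : ∀ (y : EuclideanSpace ℝ (Fin n)) (k : ℕ),
      ‖((L s0) ^ k) y‖ ≤ α * ρ ^ k * ‖y‖ := by
    intro y k
    have := hnom y k
    rwa [map_pow] at this
  have hsol : ∀ k, x k = ((L s0) ^ k) (x 0)
      + ∑ j ∈ Finset.range k, ((L s0) ^ j) (d (k - 1 - j)) := by
    intro k
    induction k with
    | zero => simp
    | succ k ih =>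
      rw [hx' k, ih, Finset.sum_range_succ']
      simp only [map_add, map_sum, pow_zero, ContinuousLinearMap.one_apply, Nat.sub_zero,
        Nat.add_sub_cancel]
      have h1 : (L s0) (((L s0) ^ k) (x 0)) = ((L s0) ^ (k + 1)) (x 0) := by
        rw [pow_succ']; rfl
      have h2 : ∀ j ∈ Finset.range k,
          (L s0) (((L s0) ^ j) (d (k - 1 - j))) = ((L s0) ^ (j + 1)) (d (k - (j + 1))) := by
        intro j hj
        have : k - (j + 1) = k - 1 - j := by omega
        rw [this, pow_succ']; rfl
      rw [Finset.sum_congr rfl h2] at *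
      rw [h1]
      abel
  have hvsol : ∀ k, v k = ρ ^ k * v 0
      + ∑ j ∈ Finset.range k, ρ ^ j * (β * γ (k - 1 - j) * v (k - 1 - j)
          + β * ‖w (k - 1 - j)‖) := by
    intro k
    induction k with
    | zero => simp
    | succ k ih =>
      have hvk : v (k + 1) = ρ * v k + (β * γ k * v k + β * ‖w k‖) := by
        rw [hv k, hγeq]; ring
      rw [hvk, ih, Finset.sum_range_succ']
      simp only [pow_zero, Nat.sub_zero, Nat.add_sub_cancel, one_mul]
      have h2 : ∀ j ∈ Finset.range k,
          ρ ^ (j + 1) * (β * γ (k - (j + 1)) * v (k - (j + 1)) + β * ‖w (k - (j + 1))‖)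
            = ρ * (ρ ^ j * (β * γ (k - 1 - j) * v (k - 1 - j) + β * ‖w (k - 1 - j)‖)) := by
        intro j hj
        have : k - (j + 1) = k - 1 - j := by omega
        rw [this]; ring
      rw [Finset.sum_congr rfl h2, ← Finset.mul_sum, ih]
      ring
  intro k
  induction k using Nat.strong_induction_on with
  | _ k ih =>
    have hd_bound : ∀ m, ‖d m‖ ≤ γ m * ‖x m‖ + ‖w m‖ := by
      intro m
      refine (norm_add_le _ _).trans ?_
      gcongr
      exact (L (σ m) - L s0).le_opNorm (x m)
    have step1 : ‖x k‖ ≤ α * ρ ^ k * ‖x 0‖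
        + ∑ j ∈ Finset.range k, α * ρ ^ j * ‖d (k - 1 - j)‖ := by
      rw [hsol k]
      refine (norm_add_le _ _).trans ?_
      gcongr
      · exact hpow _ k
      · refine (norm_sum_le _ _).trans ?_
        exact Finset.sum_le_sum fun j _ => hpow _ j
    refine step1.trans ?_
    rw [hvsol k]
    have hterm : ∀ j ∈ Finset.range k,
        α * ρ ^ j * ‖d (k - 1 - j)‖
          ≤ ρ ^ j * (β * γ (k - 1 - j) * v (k - 1 - j) + β * ‖w (k - 1 - j)‖) := by
      intro j hj
      have hjk : j < k := Finset.mem_range.mp hj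
      set m := k - 1 - j with hm
      have hmk : m < k := by omega
      have hxm : ‖x m‖ ≤ v m := ih m hmk
      have hvm : 0 ≤ v m := (norm_nonneg _).trans hxm
      have h1 : α * ρ ^ j * ‖d m‖ ≤ α * ρ ^ j * (γ m * ‖x m‖ + ‖w m‖) := by
        have hρj : (0:ℝ) ≤ α * ρ ^ j := by positivity
        exact mul_le_mul_of_nonneg_left (hd_bound m) hρj
      refine h1.trans ?_
      have h2 : α * (γ m * ‖x m‖) ≤ β * γ m * v m := by
        have := mul_le_mul hβ (mul_le_mul_of_nonneg_left hxm (hγ0 m))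
          (by positivity) (by linarith)
        linarith [this]
      have h3 : α * ‖w m‖ ≤ β * ‖w m‖ :=
        mul_le_mul_of_nonneg_right hβ (norm_nonneg _)
      have hρj : (0:ℝ) ≤ ρ ^ j := by positivity
      calc α * ρ ^ j * (γ m * ‖x m‖ + ‖w m‖)
          = ρ ^ j * (α * (γ m * ‖x m‖) + α * ‖w m‖) := by ring
        _ ≤ ρ ^ j * (β * γ m * v m + β * ‖w m‖) := by
            apply mul_le_mul_of_nonneg_left _ hρj
            linarith
    have hx0 : α * ρ ^ k * ‖x 0‖ = ρ ^ k * v 0 := by rw [hv0]; ring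
    rw [hx0]
    exact add_le_add_right (Finset.sum_le_sum hterm) _
end

section
/- (Lyapunov-function-based abstraction for weak execution.) Let V : ℝⁿ → ℝ satisfy: V(x) > 0 for x ≠ 0 and V(0) = 0 (positive definite); there exists γ ≥ 1 with √V(a+b) ≤ √V(a) + γ √V(b) for all a, b ∈ ℝⁿ (weak subadditivity); there exist c₁, c₂ > 0 with c₁ √V(x) ≤ |x| ≤ c₂ √V(x) for all x ∈ ℝⁿ (norm equivalence). Let Σ be a set, and for each σ ∈ Σ let f_σ : ℝⁿ → ℝⁿ and ρ_σ ≥ 0 satisfy √V(f_σ(x)) ≤ ρ_σ √V(x) for all x ∈ ℝⁿ. Let α ≥ c₂/c₁ and β ≥ γ c₂/c₁. Then for every mode sequence σ : ℕ₀ → Σ, every disturbance w : ℕ₀ → ℝⁿ, and every x_0 ∈ ℝⁿ, the solution of x_{k+1} = f_{σ_k}(x_k) + w_k satisfies |x_k| ≤ v̄_k for all k ∈ ℕ₀, where v̄_0 = α |x_0| and v̄_{k+1} = ρ_{σ_k} v̄_k + β |w_k|. -/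
/-- Lyapunov-function-based abstraction for weak execution: with a positive definite,
weakly subadditive, norm-equivalent function `V`, mode dynamics `f_σ` with V-gain
bounds `ρ_σ`, and `α ≥ c₂/c₁`, `β ≥ γ c₂/c₁`, every solution of
`x_{k+1} = f_{σ_k}(x_k) + w_k` satisfies `|x_k| ≤ v̄_k`, where `v̄_0 = α |x_0|` and
`v̄_{k+1} = ρ_{σ_k} v̄_k + β |w_k|`. -/
theorem stmt6 {n : ℕ} {S : Type*} (V : EuclideanSpace ℝ (Fin n) → ℝ)
    (hpos : ∀ x : EuclideanSpace ℝ (Fin n), x ≠ 0 → 0 < V x) (hzero : V 0 = 0)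
    (γ : ℝ) (hγ : 1 ≤ γ)
    (hsub : ∀ a b : EuclideanSpace ℝ (Fin n),
      Real.sqrt (V (a + b)) ≤ Real.sqrt (V a) + γ * Real.sqrt (V b))
    (c₁ c₂ : ℝ) (hc₁ : 0 < c₁) (hc₂ : 0 < c₂)
    (hequiv : ∀ x : EuclideanSpace ℝ (Fin n),
      c₁ * Real.sqrt (V x) ≤ ‖x‖ ∧ ‖x‖ ≤ c₂ * Real.sqrt (V x))
    (f : S → EuclideanSpace ℝ (Fin n) → EuclideanSpace ℝ (Fin n))
    (ρ : S → ℝ) (hρ : ∀ s, 0 ≤ ρ s)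
    (hgain : ∀ (s : S) (x : EuclideanSpace ℝ (Fin n)),
      Real.sqrt (V (f s x)) ≤ ρ s * Real.sqrt (V x))
    (α β : ℝ) (hα : c₂ / c₁ ≤ α) (hβ : γ * (c₂ / c₁) ≤ β)
    (σ : ℕ → S) (w x : ℕ → EuclideanSpace ℝ (Fin n))
    (hx : ∀ k, x (k + 1) = f (σ k) (x k) + w k)
    (v : ℕ → ℝ) (hv0 : v 0 = α * ‖x 0‖)
    (hv : ∀ k, v (k + 1) = ρ (σ k) * v k + β * ‖w k‖) :
    ∀ k, ‖x k‖ ≤ v k := by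

  have key : ∀ k, c₂ * Real.sqrt (V (x k)) ≤ v k := by
    intro k
    induction k with
    | zero =>
      have h1 := (hequiv (x 0)).1
      have : Real.sqrt (V (x 0)) ≤ ‖x 0‖ / c₁ := by
        rw [le_div_iff₀ hc₁]; linarith [h1]
      rw [hv0]
      have hα' : c₂ / c₁ * ‖x 0‖ ≤ α * ‖x 0‖ :=
        mul_le_mul_of_nonneg_right hα (norm_nonneg _)
      calc c₂ * Real.sqrt (V (x 0)) ≤ c₂ * (‖x 0‖ / c₁) := by
            exact mul_le_mul_of_nonneg_left this hc₂.le
        _ = c₂ / c₁ * ‖x 0‖ := by ring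
        _ ≤ α * ‖x 0‖ := hα'
    | succ k ih =>
      have hs := hsub (f (σ k) (x k)) (w k)
      have hg := hgain (σ k) (x k)
      have hw : Real.sqrt (V (w k)) ≤ ‖w k‖ / c₁ := by
        rw [le_div_iff₀ hc₁]; linarith [(hequiv (w k)).1]
      rw [hx k, hv k]
      have h1 : Real.sqrt (V (f (σ k) (x k) + w k)) ≤
          ρ (σ k) * Real.sqrt (V (x k)) + γ * (‖w k‖ / c₁) := by
        have := mul_le_mul_of_nonneg_left hw (by linarith : (0:ℝ) ≤ γ)
        linarith
      have h2 : c₂ * Real.sqrt (V (f (σ k) (x k) + w k)) ≤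
          ρ (σ k) * (c₂ * Real.sqrt (V (x k))) + γ * (c₂ / c₁) * ‖w k‖ :=
        calc c₂ * Real.sqrt (V (f (σ k) (x k) + w k))
            ≤ c₂ * (ρ (σ k) * Real.sqrt (V (x k)) + γ * (‖w k‖ / c₁)) :=
              mul_le_mul_of_nonneg_left h1 hc₂.le
          _ = ρ (σ k) * (c₂ * Real.sqrt (V (x k))) + γ * (c₂ / c₁) * ‖w k‖ := by ring
      have h3 : ρ (σ k) * (c₂ * Real.sqrt (V (x k))) ≤ ρ (σ k) * v k :=
        mul_le_mul_of_nonneg_left ih (hρ _)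
      have h4 : γ * (c₂ / c₁) * ‖w k‖ ≤ β * ‖w k‖ :=
        mul_le_mul_of_nonneg_right hβ (norm_nonneg _)
      linarith
  intro k
  exact le_trans (hequiv (x k)).2 (key k)
end

section
/- (Skip-count bound for (m,K)-weak execution.) Let K ≥ 1 and m̄ ≥ 0 be natural numbers and let σ : ℕ₀ → {0,1} satisfy the (m,K)-constraint: for every k ∈ ℕ₀, Σ_{i=k}^{k+K−1} σ_i ≤ m̄. Then for every k ∈ ℕ₀: Σ_{i=0}^{k−1} σ_i ≤ m̄ ⌊k/K⌋ + min(m̄, k mod K). -/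
/-- Skip-count bound for `(m,K)`-weak execution: if any `K` consecutive terms of the
binary sequence `σ` sum to at most `m̄`, then `Σ_{i<k} σ_i ≤ m̄ ⌊k/K⌋ + min(m̄, k mod K)`. -/
theorem stmt8 (K mbar : ℕ) (hK : 1 ≤ K)
    (σ : ℕ → ℕ) (hσ : ∀ i, σ i ≤ 1)
    (hmk : ∀ k, ∑ i ∈ Finset.Ico k (k + K), σ i ≤ mbar) :
    ∀ k, ∑ i ∈ Finset.range k, σ i ≤ mbar * (k / K) + min mbar (k % K) := by
  intro k
  -- split into full blocks and a partial block
  have hblocks : ∀ q : ℕ, ∑ i ∈ Finset.Ico 0 (q * K), σ i ≤ mbar * q := by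
    intro q
    induction q with
    | zero => simp
    | succ q ih =>
      have hle : q * K ≤ (q + 1) * K := by nlinarith
      rw [← Finset.sum_Ico_consecutive σ (Nat.zero_le (q * K)) hle]
      have : ∑ i ∈ Finset.Ico (q * K) ((q + 1) * K), σ i ≤ mbar := by
        have := hmk (q * K)
        have h2 : q * K + K = (q + 1) * K := by ring
        rwa [h2] at this
      calc ∑ i ∈ Finset.Ico 0 (q * K), σ i + ∑ i ∈ Finset.Ico (q * K) ((q + 1) * K), σ i
          ≤ mbar * q + mbar := by omega
        _ = mbar * (q + 1) := by ring
  set q := k / K with hq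
  set r := k % K with hr
  have hk : k = q * K + r := by rw [hq, hr, Nat.mul_comm]; exact (Nat.div_add_mod k K).symm
  have hle : q * K ≤ k := by omega
  rw [Finset.range_eq_Ico,
    ← Finset.sum_Ico_consecutive σ (Nat.zero_le (q * K)) hle]
  have hpart1 : ∑ i ∈ Finset.Ico (q * K) k, σ i ≤ r := by
    calc ∑ i ∈ Finset.Ico (q * K) k, σ i ≤ ∑ i ∈ Finset.Ico (q * K) k, 1 :=
          Finset.sum_le_sum (fun i _ => hσ i)
      _ = r := by rw [Finset.sum_const, Nat.card_Ico, smul_eq_mul, mul_one]; omega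
  have hpart2 : ∑ i ∈ Finset.Ico (q * K) k, σ i ≤ mbar := by
    have hsub : Finset.Ico (q * K) k ⊆ Finset.Ico (q * K) (q * K + K) := by
      apply Finset.Ico_subset_Ico le_rfl
      have : r < K := by rw [hr]; exact Nat.mod_lt _ hK
      omega
    calc ∑ i ∈ Finset.Ico (q * K) k, σ i
        ≤ ∑ i ∈ Finset.Ico (q * K) (q * K + K), σ i :=
          Finset.sum_le_sum_of_subset hsub
      _ ≤ mbar := hmk _
  have := hblocks q
  omega
end

section
/- (Tightness of the skip-count bound.) Let K ≥ 1 and 0 ≤ m̄ ≤ K be natural numbers and define σ : ℕ₀ → {0,1} by σ_k = 1 if k mod K < m̄ and σ_k = 0 otherwise. Then σ satisfies the (m,K)-constraint (for every k, Σ_{i=k}^{k+K−1} σ_i ≤ m̄), and for every k ∈ ℕ₀ the skip count attains the bound with equality: Σ_{i=0}^{k−1} σ_i = m̄ ⌊k/K⌋ + min(m̄, k mod K). -/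
/-- Tightness of the skip-count bound: the sequence `σ_k = 1` iff `k mod K < m̄`
satisfies the `(m,K)`-constraint and attains the skip-count bound with equality. -/
theorem stmt9 (K mbar : ℕ) (hK : 1 ≤ K) (hm : mbar ≤ K)
    (σ : ℕ → ℕ) (hσ : ∀ k, σ k = if k % K < mbar then 1 else 0) :
    (∀ k, ∑ i ∈ Finset.Ico k (k + K), σ i ≤ mbar) ∧
    (∀ k, ∑ i ∈ Finset.range k, σ i = mbar * (k / K) + min mbar (k % K)) := by
  have main : ∀ k, ∑ i ∈ Finset.range k, σ i = mbar * (k / K) + min mbar (k % K) := by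
    intro k
    induction k with
    | zero => simp
    | succ k ih =>
      rw [Finset.sum_range_succ, ih, hσ k]
      have hr : k % K < K := Nat.mod_lt _ hK
      have hmod : (k + 1) % K = (k % K + 1) % K := by
        conv_lhs => rw [← Nat.div_add_mod k K]
        rw [Nat.add_assoc, Nat.mul_add_mod]
      have hdiv : (k + 1) / K = k / K + (k % K + 1) / K := by
        conv_lhs => rw [← Nat.div_add_mod k K]
        rw [Nat.add_assoc, Nat.mul_add_div hK]
      rcases eq_or_ne (k % K + 1) K with h | h
      · have h1 : (k + 1) % K = 0 := by rw [hmod, h, Nat.mod_self]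
        have h2 : (k + 1) / K = k / K + 1 := by
          rw [hdiv, h, Nat.div_self hK]
        rw [h1, h2, Nat.mul_succ]
        split_ifs with hc <;> omega
      · have h1 : (k + 1) % K = k % K + 1 := by
          rw [hmod, Nat.mod_eq_of_lt (by omega)]
        have h2 : (k + 1) / K = k / K := by
          rw [hdiv, Nat.div_eq_of_lt (show k % K + 1 < K by omega), Nat.add_zero]
        rw [h1, h2]
        split_ifs with hc <;> omega
  refine ⟨fun k => ?_, main⟩
  have hsplit : ∑ i ∈ Finset.range k, σ i + ∑ i ∈ Finset.Ico k (k + K), σ i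
      = ∑ i ∈ Finset.range (k + K), σ i := by
    simp only [Finset.range_eq_Ico]
    exact Finset.sum_Ico_consecutive σ (Nat.zero_le _) (Nat.le_add_right _ _)
  have hK1 : (k + K) / K = k / K + 1 := Nat.add_div_right _ hK
  have hK2 : (k + K) % K = k % K := Nat.add_mod_right _ _
  have h1 := main k
  have h2 := main (k + K)
  rw [hK1, hK2, Nat.mul_succ] at h2
  omega
end

section
/- (Growth-factor bound under (m,K)-weak execution.) Let K ≥ 1 and m̄ ≥ 0 be natural numbers, let σ : ℕ₀ → {0,1} satisfy the (m,K)-constraint (for every k, Σ_{i=k}^{k+K−1} σ_i ≤ m̄), and let 0 < ρ₀ ≤ ρ₁ be real numbers. Define ρ_{σ_i} := ρ₀ if σ_i = 0 and ρ₁ if σ_i = 1. Then for every k ∈ ℕ₀: ∏_{i=0}^{k−1} ρ_{σ_i} ≤ ρ₀^k (ρ₁/ρ₀)^{m̄ ⌊k/K⌋ + min(m̄, k mod K)}. -/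
lemma sum_block_le (K mbar : ℕ) (hK : 1 ≤ K) (σ : ℕ → ℕ) (hσ : ∀ i, σ i ≤ 1)
    (hmk : ∀ k, ∑ i ∈ Finset.Ico k (k + K), σ i ≤ mbar) :
    ∀ q r, r < K → ∑ i ∈ Finset.range (q * K + r), σ i ≤ mbar * q + min mbar r := by
  intro q
  induction q with
  | zero =>
      intro r hr
      simp only [Nat.zero_mul, Nat.zero_add, Nat.mul_zero]
      refine le_min ?_ ?_
      · calc ∑ i ∈ Finset.range r, σ i ≤ ∑ i ∈ Finset.range K, σ i :=
              Finset.sum_le_sum_of_subset (Finset.range_subset_range.2 hr.le)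
          _ = ∑ i ∈ Finset.Ico 0 (0 + K), σ i := by rw [Finset.range_eq_Ico, Nat.zero_add]
          _ ≤ mbar := hmk 0
      · calc ∑ i ∈ Finset.range r, σ i ≤ ∑ i ∈ Finset.range r, 1 :=
              Finset.sum_le_sum (fun i _ => hσ i)
          _ = r := by simp
  | succ q ih =>
      intro r hr
      have hsplit : (q + 1) * K + r = (q * K + r) + K := by ring
      rw [hsplit, Finset.range_eq_Ico,
        ← Finset.sum_Ico_consecutive σ (Nat.zero_le (q * K + r))
          (Nat.le_add_right (q * K + r) K)]
      have := ih r hr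
      have h2 := hmk (q * K + r)
      rw [Finset.range_eq_Ico] at this
      calc _ ≤ (mbar * q + min mbar r) + mbar := Nat.add_le_add this h2
        _ = mbar * (q + 1) + min mbar r := by ring

/-- Growth-factor bound under `(m,K)`-weak execution: with rates `0 < ρ₀ ≤ ρ₁` assigned
to nominal (`σ_i = 0`) and skipped (`σ_i = 1`) steps,
`∏_{i<k} ρ_{σ_i} ≤ ρ₀^k (ρ₁/ρ₀)^{m̄ ⌊k/K⌋ + min(m̄, k mod K)}`. -/
theorem stmt11 (K mbar : ℕ) (hK : 1 ≤ K)
    (σ : ℕ → ℕ) (hσ : ∀ i, σ i ≤ 1)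
    (hmk : ∀ k, ∑ i ∈ Finset.Ico k (k + K), σ i ≤ mbar)
    (ρ₀ ρ₁ : ℝ) (h0 : 0 < ρ₀) (h01 : ρ₀ ≤ ρ₁) :
    ∀ k, (∏ i ∈ Finset.range k, if σ i = 0 then ρ₀ else ρ₁) ≤
      ρ₀ ^ k * (ρ₁ / ρ₀) ^ (mbar * (k / K) + min mbar (k % K)) := by
  intro k
  have hρ : (1:ℝ) ≤ ρ₁ / ρ₀ := (one_le_div h0).2 h01
  have hfac : ∀ i, (if σ i = 0 then ρ₀ else ρ₁) = ρ₀ * (ρ₁ / ρ₀) ^ σ i := by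
    intro i
    rcases Nat.le_one_iff_eq_zero_or_eq_one.1 (hσ i) with h | h <;> simp [h]
    field_simp
  have hprod : (∏ i ∈ Finset.range k, if σ i = 0 then ρ₀ else ρ₁)
      = ρ₀ ^ k * (ρ₁ / ρ₀) ^ (∑ i ∈ Finset.range k, σ i) := by
    simp only [hfac, Finset.prod_mul_distrib, Finset.prod_const, Finset.card_range,
      Finset.prod_pow_eq_pow_sum]
  rw [hprod]
  have hsum : ∑ i ∈ Finset.range k, σ i ≤ mbar * (k / K) + min mbar (k % K) := by
    have := sum_block_le K mbar hK σ hσ hmk (k / K) (k % K) (Nat.mod_lt k hK)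
    rwa [Nat.div_add_mod'] at this
  gcongr
end

section
/- (Overshoot bound for the (m,K) growth-factor envelope.) Let K ≥ 1 and 0 ≤ m̄ ≤ K be natural numbers and let 0 < ρ₀ ≤ ρ₁ be real numbers. Define ρ̃ := ρ₀^{(K−m̄)/K} ρ₁^{m̄/K} and κ̄_{0,k} := ρ₀^k (ρ₁/ρ₀)^{m̄ ⌊k/K⌋ + min(m̄, k mod K)}. Then for every k ∈ ℕ₀: κ̄_{0,k} ≤ (ρ₁/ρ₀)^{m̄} ρ̃^k; equivalently, sup_{k ∈ ℕ₀} ρ̃^{−k} κ̄_{0,k} ≤ (ρ₁/ρ₀)^{m̄}. -/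
/-- Overshoot bound for the `(m,K)` growth-factor envelope: with
`ρ̃ = ρ₀^{(K−m̄)/K} ρ₁^{m̄/K}` and
`κ̄_{0,k} = ρ₀^k (ρ₁/ρ₀)^{m̄ ⌊k/K⌋ + min(m̄, k mod K)}`, one has
`κ̄_{0,k} ≤ (ρ₁/ρ₀)^m̄ ρ̃^k` for all `k`; equivalently
`sup_k ρ̃^{−k} κ̄_{0,k} ≤ (ρ₁/ρ₀)^m̄`. -/
theorem stmt12 (K mbar : ℕ) (hK : 1 ≤ K) (hm : mbar ≤ K)
    (ρ₀ ρ₁ : ℝ) (h0 : 0 < ρ₀) (h01 : ρ₀ ≤ ρ₁) :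
    (∀ k : ℕ,
      ρ₀ ^ k * (ρ₁ / ρ₀) ^ (mbar * (k / K) + min mbar (k % K)) ≤
        (ρ₁ / ρ₀) ^ mbar *
          (ρ₀ ^ (((K : ℝ) - (mbar : ℝ)) / (K : ℝ)) * ρ₁ ^ ((mbar : ℝ) / (K : ℝ))) ^ k) ∧
    (⨆ k : ℕ,
      ((ρ₀ ^ (((K : ℝ) - (mbar : ℝ)) / (K : ℝ)) * ρ₁ ^ ((mbar : ℝ) / (K : ℝ))) ^ k)⁻¹ *
        (ρ₀ ^ k * (ρ₁ / ρ₀) ^ (mbar * (k / K) + min mbar (k % K)))) ≤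
      (ρ₁ / ρ₀) ^ mbar := by
  have hK0 : (0:ℝ) < K := by exact_mod_cast hK
  set r : ℝ := ρ₁ / ρ₀ with hrdef
  have hr0 : 0 < r := div_pos (lt_of_lt_of_le h0 h01) h0
  have hr : 1 ≤ r := (one_le_div h0).2 h01
  have hρ₁ : ρ₁ = ρ₀ * r := by rw [hrdef]; field_simp
  have htilde : ρ₀ ^ (((K : ℝ) - (mbar : ℝ)) / (K : ℝ)) * ρ₁ ^ ((mbar : ℝ) / (K : ℝ))
      = ρ₀ * r ^ ((mbar : ℝ) / (K : ℝ)) := by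
    rw [hρ₁, Real.mul_rpow h0.le hr0.le, ← mul_assoc,
      ← Real.rpow_add h0]
    have : ((K : ℝ) - (mbar : ℝ)) / (K : ℝ) + (mbar : ℝ) / (K : ℝ) = 1 := by
      field_simp
      ring
    rw [this, Real.rpow_one]
  have htpos : 0 < ρ₀ * r ^ ((mbar : ℝ)/(K:ℝ)) :=
    mul_pos h0 (Real.rpow_pos_of_pos hr0 _)
  have main : ∀ k : ℕ,
      ρ₀ ^ k * r ^ (mbar * (k / K) + min mbar (k % K)) ≤
        r ^ mbar * (ρ₀ * r ^ ((mbar : ℝ)/(K:ℝ))) ^ k := by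
    intro k
    have hpow : (ρ₀ * r ^ ((mbar : ℝ)/(K:ℝ))) ^ k
        = ρ₀ ^ k * r ^ ((mbar : ℝ) * k / (K:ℝ)) := by
      rw [mul_pow, ← Real.rpow_natCast (r ^ ((mbar:ℝ)/(K:ℝ))) k,
        ← Real.rpow_mul hr0.le]
      ring_nf
    rw [hpow, mul_comm (r ^ mbar), mul_assoc]
    refine mul_le_mul_of_nonneg_left ?_ (pow_pos h0 k).le
    rw [← Real.rpow_natCast r (mbar * (k / K) + min mbar (k % K)),
      ← Real.rpow_natCast r mbar, ← Real.rpow_add hr0]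
    refine Real.rpow_le_rpow_of_exponent_le hr ?_
    push_cast
    have h1 : (mbar:ℝ) ⊓ ((k % K : ℕ):ℝ) ≤ (mbar : ℝ) := min_le_left _ _
    have h2 : (mbar : ℝ) * (k / K : ℕ) ≤ (mbar:ℝ) * k / (K:ℝ) := by
      rw [mul_div_assoc]
      refine mul_le_mul_of_nonneg_left ?_ (Nat.cast_nonneg _)
      rw [le_div_iff₀ hK0]
      exact_mod_cast Nat.div_mul_le_self k K
    linarith
  refine ⟨by intro k; rw [htilde]; exact main k, ?_⟩
  refine ciSup_le fun k => ?_
  rw [htilde, inv_mul_le_iff₀ (pow_pos htpos k)]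
  exact (main k).trans_eq (mul_comm _ _)
end

section
/- (Exponential stability criterion for (m,K)-weak execution.) Let K ≥ 1 and 0 ≤ m ≤ K be natural numbers, set m̄ := K − m, let σ : ℕ₀ → {0,1} satisfy the (m,K)-constraint (for every k, Σ_{i=k}^{k+K−1} σ_i ≤ m̄), and let 0 < ρ₀ ≤ ρ₁ and α ≥ 1 be real numbers. Suppose x : ℕ₀ → ℝⁿ satisfies the abstraction guarantee |x_k| ≤ α |x_0| ∏_{i=0}^{k−1} ρ_{σ_i} for all k, where ρ_{σ_i} := ρ₀ if σ_i = 0 and ρ₁ if σ_i = 1. If ρ̃ := ρ₀^{m/K} ρ₁^{(K−m)/K} < 1, then the system is exponentially stable: |x_k| ≤ α α̃ ρ̃^k |x_0| for all k ∈ ℕ₀, where α̃ := (ρ₁/ρ₀)^{K−m}. -/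
lemma aux_prod (σ : ℕ → ℕ) (hσ : ∀ i, σ i ≤ 1) (ρ₀ ρ₁ : ℝ) (h0 : ρ₀ ≠ 0) :
    ∀ k, (∏ i ∈ Finset.range k, if σ i = 0 then ρ₀ else ρ₁)
      = ρ₀ ^ k * (ρ₁ / ρ₀) ^ (∑ i ∈ Finset.range k, σ i) := by
  intro k
  induction k with
  | zero => simp
  | succ k ih =>
    rw [Finset.prod_range_succ, Finset.sum_range_succ, ih]
    rcases Nat.le_one_iff_eq_zero_or_eq_one.1 (hσ k) with h | h
    · simp only [h, if_true, add_zero, pow_succ]; ring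
    · simp only [h, if_neg one_ne_zero, pow_succ]
      field_simp

lemma aux_sum (K m : ℕ) (σ : ℕ → ℕ)
    (hmk : ∀ k, ∑ i ∈ Finset.Ico k (k + K), σ i ≤ K - m) :
    ∀ q, ∑ i ∈ Finset.range (q * K), σ i ≤ q * (K - m) := by
  intro q
  induction q with
  | zero => simp
  | succ q ih =>
    have h1 : (q + 1) * K = q * K + K := by ring
    rw [h1, Finset.range_eq_Ico,
      ← Finset.sum_Ico_consecutive σ (Nat.zero_le (q * K)) (Nat.le_add_right (q * K) K)]
    rw [← Finset.range_eq_Ico] at *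
    calc _ ≤ q * (K - m) + (K - m) := Nat.add_le_add ih (hmk (q * K))
      _ = (q + 1) * (K - m) := by ring

/-- Exponential stability criterion for `(m,K)`-weak execution: if the abstraction
guarantee `|x_k| ≤ α |x_0| ∏_{i<k} ρ_{σ_i}` holds (with `ρ_{σ_i} = ρ₀` for nominal,
`ρ₁` for skipped steps) under the `(m,K)`-constraint, and
`ρ̃ = ρ₀^{m/K} ρ₁^{(K−m)/K} < 1`, then `|x_k| ≤ α α̃ ρ̃^k |x_0|` with
`α̃ = (ρ₁/ρ₀)^{K−m}`. -/
theorem stmt13 {n : ℕ} (K m : ℕ) (hK : 1 ≤ K) (hm : m ≤ K)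
    (σ : ℕ → ℕ) (hσ : ∀ i, σ i ≤ 1)
    (hmk : ∀ k, ∑ i ∈ Finset.Ico k (k + K), σ i ≤ K - m)
    (ρ₀ ρ₁ α : ℝ) (h0 : 0 < ρ₀) (h01 : ρ₀ ≤ ρ₁) (hα : 1 ≤ α)
    (x : ℕ → EuclideanSpace ℝ (Fin n))
    (hx : ∀ k, ‖x k‖ ≤ α * ‖x 0‖ * ∏ i ∈ Finset.range k, if σ i = 0 then ρ₀ else ρ₁)
    (hρt : ρ₀ ^ ((m : ℝ) / (K : ℝ)) * ρ₁ ^ (((K : ℝ) - (m : ℝ)) / (K : ℝ)) < 1) :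
    ∀ k, ‖x k‖ ≤ α * (ρ₁ / ρ₀) ^ (K - m) *
      (ρ₀ ^ ((m : ℝ) / (K : ℝ)) * ρ₁ ^ (((K : ℝ) - (m : ℝ)) / (K : ℝ))) ^ k * ‖x 0‖ := by
  intro k
  have hρ1 : (0:ℝ) < ρ₁ := lt_of_lt_of_le h0 h01
  have hr1 : (1:ℝ) ≤ ρ₁ / ρ₀ := (one_le_div h0).2 h01
  have hr0 : (0:ℝ) < ρ₁ / ρ₀ := lt_of_lt_of_le one_pos hr1
  have hKpos : (0:ℝ) < (K:ℝ) := by exact_mod_cast hK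
  set s : ℕ := ∑ i ∈ Finset.range k, σ i with hs
  -- nat bound on s
  have hk : k ≤ (k / K + 1) * K := by
    have ha := Nat.div_add_mod' k K
    have hb := Nat.mod_lt k (show 0 < K from hK)
    calc k = k / K * K + k % K := ha.symm
      _ ≤ k / K * K + K := Nat.add_le_add_left (le_of_lt hb) _
      _ = (k / K + 1) * K := by ring
  have hs1 : s ≤ (k / K + 1) * (K - m) := by
    calc s ≤ ∑ i ∈ Finset.range ((k / K + 1) * K), σ i :=
          Finset.sum_le_sum_of_subset (Finset.range_subset_range.2 hk)
      _ ≤ _ := aux_sum K m σ hmk (k / K + 1)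
  -- real bound on s
  have hsr : (s : ℝ) ≤ ((K:ℝ) - m) + (k:ℝ) * (((K:ℝ) - m) / K) := by
    have h1 : ((s:ℝ)) ≤ (((k / K + 1 : ℕ)):ℝ) * (((K - m : ℕ)):ℝ) := by
      exact_mod_cast hs1
    have h2 : (((k / K : ℕ)):ℝ) ≤ (k:ℝ) / (K:ℝ) := Nat.cast_div_le
    have h3 : (((K - m : ℕ)):ℝ) = (K:ℝ) - m := by
      rw [Nat.cast_sub hm]
    have h4 : (0:ℝ) ≤ (K:ℝ) - m := by
      rw [← h3]; positivity
    calc (s:ℝ) ≤ (((k / K : ℕ) : ℝ) + 1) * ((K:ℝ) - m) := by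
          rw [← h3]
          calc (s:ℝ) ≤ ((k / K + 1 : ℕ) : ℝ) * ((K - m : ℕ) : ℝ) := h1
            _ = (((k / K : ℕ) : ℝ) + 1) * ((K - m : ℕ) : ℝ) := by push_cast; ring
      _ ≤ ((k:ℝ) / K + 1) * ((K:ℝ) - m) := by nlinarith
      _ = ((K:ℝ) - m) + (k:ℝ) * (((K:ℝ) - m) / K) := by field_simp; ring
  -- product bound
  set r : ℝ := ρ₁ / ρ₀ with hrdef
  have hprod : (∏ i ∈ Finset.range k, if σ i = 0 then ρ₀ else ρ₁) = ρ₀ ^ k * r ^ s :=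
    aux_prod σ hσ ρ₀ ρ₁ (ne_of_gt h0) k
  have hrtk : (ρ₀ ^ ((m : ℝ) / (K : ℝ)) * ρ₁ ^ (((K : ℝ) - (m : ℝ)) / (K : ℝ))) ^ k
      = ρ₀ ^ k * r ^ (((K:ℝ) - m) / K * k) := by
    have hρ1' : ρ₁ = ρ₀ * r := by rw [hrdef]; field_simp
    rw [hρ1', Real.mul_rpow (le_of_lt h0) (le_of_lt hr0)]
    rw [show ρ₀ ^ ((m:ℝ)/K) * (ρ₀ ^ (((K:ℝ)-m)/K) * r ^ (((K:ℝ)-m)/K))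
        = (ρ₀ ^ ((m:ℝ)/K) * ρ₀ ^ (((K:ℝ)-m)/K)) * r ^ (((K:ℝ)-m)/K) by ring]
    rw [← Real.rpow_add h0]
    have : (m:ℝ)/K + ((K:ℝ)-m)/K = 1 := by field_simp; ring
    rw [this, Real.rpow_one, mul_pow, ← Real.rpow_natCast (r ^ (((K:ℝ)-m)/K)) k,
      ← Real.rpow_mul (le_of_lt hr0)]
  have hkey : ρ₀ ^ k * r ^ s ≤ r ^ (K - m) * (ρ₀ ^ ((m : ℝ) / (K : ℝ)) * ρ₁ ^ (((K : ℝ) - (m : ℝ)) / (K : ℝ))) ^ k := by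
    rw [hrtk]
    have hrKm : (r:ℝ) ^ (K - m) = r ^ (((K:ℝ) - m)) := by
      rw [← Real.rpow_natCast r (K - m), Nat.cast_sub hm]
    have hrs : r ^ s = r ^ ((s:ℝ)) := by rw [Real.rpow_natCast]
    rw [hrKm, hrs, show r ^ (((K:ℝ)-m)) * (ρ₀ ^ k * r ^ (((K:ℝ)-m)/K * k))
        = ρ₀ ^ k * (r ^ (((K:ℝ)-m)) * r ^ (((K:ℝ)-m)/K * k)) by ring,
      ← Real.rpow_add hr0]
    apply mul_le_mul_of_nonneg_left _ (by positivity)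
    apply Real.rpow_le_rpow_of_exponent_le hr1
    calc (s:ℝ) ≤ ((K:ℝ) - m) + (k:ℝ) * (((K:ℝ) - m) / K) := hsr
      _ = (K:ℝ) - m + ((K:ℝ)-m)/K * k := by ring
  calc ‖x k‖ ≤ α * ‖x 0‖ * (ρ₀ ^ k * r ^ s) := by rw [← hprod]; exact hx k
    _ ≤ α * ‖x 0‖ * (r ^ (K - m) * (ρ₀ ^ ((m : ℝ) / (K : ℝ)) * ρ₁ ^ (((K : ℝ) - (m : ℝ)) / (K : ℝ))) ^ k) := by
        apply mul_le_mul_of_nonneg_left hkey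
        positivity
    _ = α * (ρ₁ / ρ₀) ^ (K - m) *
      (ρ₀ ^ ((m : ℝ) / (K : ℝ)) * ρ₁ ^ (((K : ℝ) - (m : ℝ)) / (K : ℝ))) ^ k * ‖x 0‖ := by
        rw [hrdef]; ring
end

section
/- (Counterexample: instability under (2,4)-weak execution.) Let a = 1/2 and c = 1000, and define the real 3×3 matrices A₀ with rows (a,0,a),(0,0,0),(0,0,0) and A₁ with rows (a,0,0),(c,0,0),(0,1,0). Define the 4-periodic sequence σ : ℕ₀ → {0,1} by (σ_0,σ_1,σ_2,σ_3) = (0,0,1,1) and σ_{k+4} = σ_k, and the transition matrices Φ_0 = I, Φ_{k+1} = A_{σ_k} Φ_k. Then: (i) σ satisfies the (2,4)-constraint, i.e. Σ_{i=k}^{k+3} σ_i ≤ 2 for all k; and (ii) there exists x₀ ∈ ℝ³ with x₀ ≠ 0 such that Φ_{4i} x₀ = (a⁴ + c·a²)^i x₀ for all i ∈ ℕ₀, and hence |Φ_{4i} x₀| = (4001/16)^i |x₀| is unbounded as i → ∞, so the switched system x_{k+1} = A_{σ_k} x_k is not exponentially stable under (2,4)-weak execution. -/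
/-- Counterexample, instability under `(2,4)`-weak execution: with `a = 1/2`, `c = 1000`,
the 4-periodic skip pattern `(0,0,1,1)` satisfies the `(2,4)`-constraint, yet there is a
nonzero `x₀` with `Φ_{4i} x₀ = (a⁴ + c·a²)^i x₀`, hence
`|Φ_{4i} x₀| = (4001/16)^i |x₀|` grows unboundedly and the switched system is not
exponentially stable. -/
theorem stmt17 (a c : ℝ) (ha : a = 1 / 2) (hc : c = 1000)
    (A₀ A₁ : Matrix (Fin 3) (Fin 3) ℝ)
    (hA₀ : A₀ = !![a, 0, a; 0, 0, 0; 0, 0, 0])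
    (hA₁ : A₁ = !![a, 0, 0; c, 0, 0; 0, 1, 0])
    (σ : ℕ → ℕ)
    (hσdef : ∀ k, σ k = if k % 4 = 2 ∨ k % 4 = 3 then 1 else 0)
    (Φ : ℕ → Matrix (Fin 3) (Fin 3) ℝ)
    (hΦ0 : Φ 0 = 1)
    (hΦ : ∀ k, Φ (k + 1) = (if σ k = 0 then A₀ else A₁) * Φ k) :
    (∀ k, ∑ i ∈ Finset.Ico k (k + 4), σ i ≤ 2) ∧
    (∃ x₀ : EuclideanSpace ℝ (Fin 3), x₀ ≠ 0 ∧
      (∀ i : ℕ, Matrix.toEuclideanCLM (𝕜 := ℝ) (Φ (4 * i)) x₀ =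
        (a ^ 4 + c * a ^ 2) ^ i • x₀) ∧
      (∀ i : ℕ, ‖Matrix.toEuclideanCLM (𝕜 := ℝ) (Φ (4 * i)) x₀‖ =
        ((4001 : ℝ) / 16) ^ i * ‖x₀‖)) ∧
    ¬ ∃ (C ρ : ℝ), ρ < 1 ∧
        ∀ (x : EuclideanSpace ℝ (Fin 3)) (k : ℕ),
          ‖Matrix.toEuclideanCLM (𝕜 := ℝ) (Φ k) x‖ ≤ C * ρ ^ k * ‖x‖ := by
  subst ha hc hA₀ hA₁
  -- the eigenvalue
  have hlam : ((1:ℝ)/2) ^ 4 + 1000 * ((1:ℝ)/2) ^ 2 = 4001 / 16 := by norm_num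
  -- the eigenvector (as a plain function)
  set v : Fin 3 → ℝ := ![1/16, 125, 250] with hv
  set x₀ : EuclideanSpace ℝ (Fin 3) := (WithLp.equiv 2 (Fin 3 → ℝ)).symm v with hx₀
  -- σ values along a period
  have hσ0 : ∀ i, σ (4 * i) = 0 := by
    intro i; rw [hσdef]
    have : (4 * i) % 4 = 0 := by omega
    simp [this]
  have hσ1 : ∀ i, σ (4 * i + 1) = 0 := by
    intro i; rw [hσdef]
    have : (4 * i + 1) % 4 = 1 := by omega
    simp [this]
  have hσ2 : ∀ i, σ (4 * i + 2) = 1 := by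
    intro i; rw [hσdef]
    have : (4 * i + 2) % 4 = 2 := by omega
    simp [this]
  have hσ3 : ∀ i, σ (4 * i + 3) = 1 := by
    intro i; rw [hσdef]
    have : (4 * i + 3) % 4 = 3 := by omega
    simp [this]
  -- the key mulVec computation over one period
  have hstep :
      (!![(1:ℝ)/2, 0, 0; 1000, 0, 0; 0, 1, 0]).mulVec
        ((!![(1:ℝ)/2, 0, 0; 1000, 0, 0; 0, 1, 0]).mulVec
          ((!![(1:ℝ)/2, 0, (1:ℝ)/2; 0, 0, 0; 0, 0, 0]).mulVec
            ((!![(1:ℝ)/2, 0, (1:ℝ)/2; 0, 0, 0; 0, 0, 0]).mulVec v)))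
      = ((4001:ℝ)/16) • v := by
    funext j
    fin_cases j <;>
      norm_num [Matrix.mulVec, dotProduct, Fin.sum_univ_succ, hv]
  -- iteration lemma
  have hA1 : ∀ k, σ k = 1 → Φ (k + 1) = !![(1:ℝ)/2, 0, 0; 1000, 0, 0; 0, 1, 0] * Φ k := by
    intro k hk; rw [hΦ, hk]; norm_num
  have hA0 : ∀ k, σ k = 0 → Φ (k + 1) = !![(1:ℝ)/2, 0, (1:ℝ)/2; 0, 0, 0; 0, 0, 0] * Φ k := by
    intro k hk; rw [hΦ, hk]; norm_num
  have key : ∀ i : ℕ, (Φ (4 * i)).mulVec v = ((4001:ℝ)/16) ^ i • v := by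
    intro i
    induction i with
    | zero => simp [hΦ0, Matrix.one_mulVec]
    | succ n ih =>
        have e4 : 4 * (n + 1) = (4 * n + 3) + 1 := by ring
        rw [e4, hA1 _ (hσ3 n), hA1 _ (hσ2 n),
          show (4 * n + 2 : ℕ) = (4 * n + 1) + 1 from rfl, hA0 _ (hσ1 n), hA0 _ (hσ0 n)]
        rw [← Matrix.mulVec_mulVec, ← Matrix.mulVec_mulVec, ← Matrix.mulVec_mulVec,
          ← Matrix.mulVec_mulVec, ih, Matrix.mulVec_smul, Matrix.mulVec_smul,
          Matrix.mulVec_smul, Matrix.mulVec_smul, hstep, smul_smul, ← pow_succ]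
  -- transfer to EuclideanSpace
  have keyE : ∀ i : ℕ, Matrix.toEuclideanCLM (𝕜 := ℝ) (Φ (4 * i)) x₀ =
      ((4001:ℝ)/16) ^ i • x₀ := by
    intro i
    rw [hx₀, WithLp.equiv_symm_apply, Matrix.toEuclideanCLM_toLp, key i,
      WithLp.toLp_smul]
  have hx₀ne : x₀ ≠ 0 := by
    intro h
    have h1 : v = 0 := by
      have := congrArg (WithLp.equiv 2 (Fin 3 → ℝ)) h
      simpa [hx₀] using this
    have := congrFun h1 1
    simp [hv] at this
  have hx₀pos : 0 < ‖x₀‖ := norm_pos_iff.mpr hx₀ne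
  have hnorm : ∀ i : ℕ, ‖Matrix.toEuclideanCLM (𝕜 := ℝ) (Φ (4 * i)) x₀‖ =
      ((4001:ℝ)/16) ^ i * ‖x₀‖ := by
    intro i
    rw [keyE i, norm_smul]
    congr 1
    rw [Real.norm_eq_abs, abs_pow, abs_of_pos (by norm_num : (0:ℝ) < 4001/16)]
  refine ⟨?_, ⟨x₀, hx₀ne, fun i => by rw [hlam]; exact keyE i, hnorm⟩, ?_⟩
  · -- the (2,4)-constraint
    intro k
    have hIco : Finset.Ico k (k + 4) = {k, k + 1, k + 2, k + 3} := by
      ext j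
      simp [Finset.mem_Ico, Finset.mem_insert]
      omega
    rw [hIco]
    have h01 : ∀ j, σ j ≤ 1 := by
      intro j; rw [hσdef]; split <;> norm_num
    have hsum : σ k + σ (k + 1) + σ (k + 2) + σ (k + 3) ≤ 2 := by
      have h4 : k % 4 = 0 ∨ k % 4 = 1 ∨ k % 4 = 2 ∨ k % 4 = 3 := by omega
      rcases h4 with h | h | h | h <;>
        rw [hσdef k, hσdef (k+1), hσdef (k+2), hσdef (k+3),
          show (k+1) % 4 = (k % 4 + 1) % 4 by omega,
          show (k+2) % 4 = (k % 4 + 2) % 4 by omega,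
          show (k+3) % 4 = (k % 4 + 3) % 4 by omega, h] <;>
        norm_num
    rw [Finset.sum_insert (by simp only [Finset.mem_insert, Finset.mem_singleton]; omega), Finset.sum_insert (by simp only [Finset.mem_insert, Finset.mem_singleton]; omega),
      Finset.sum_insert (by simp only [Finset.mem_insert, Finset.mem_singleton]; omega), Finset.sum_singleton]
    omega
  · -- no exponential stability
    rintro ⟨C, ρ, hρ, hbound⟩
    -- C ≥ 1
    have h0 := hbound x₀ 0
    rw [hΦ0] at h0
    simp only [map_one, ContinuousLinearMap.one_apply, pow_zero, mul_one] at h0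
    have hC : 1 ≤ C := by nlinarith
    -- ρ > 0, using k = 1
    have hφ1 : Φ 1 = !![(1:ℝ)/2, 0, (1:ℝ)/2; 0, 0, 0; 0, 0, 0] := by
      have := hΦ 0
      rw [hΦ0] at this
      have hσ00 : σ 0 = 0 := by rw [hσdef]; norm_num
      rw [this, hσ00, if_pos rfl, Matrix.mul_one]
    have h1 := hbound x₀ 1
    rw [hφ1, hx₀, WithLp.equiv_symm_apply, Matrix.toEuclideanCLM_toLp, ← WithLp.equiv_symm_apply] at h1
    have hmv : (!![(1:ℝ)/2, 0, (1:ℝ)/2; 0, 0, 0; 0, 0, 0]).mulVec v = ![4001/32, 0, 0] := by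
      funext j
      fin_cases j <;> norm_num [Matrix.mulVec, dotProduct, Fin.sum_univ_succ, hv]
    rw [hmv] at h1
    have hpos : (0:ℝ) < ‖(WithLp.equiv 2 (Fin 3 → ℝ)).symm ![(4001:ℝ)/32, 0, 0]‖ := by
      rw [norm_pos_iff]
      intro h
      have h1' : (![(4001:ℝ)/32, 0, 0] : Fin 3 → ℝ) = 0 := by
        have := congrArg (WithLp.equiv 2 (Fin 3 → ℝ)) h
        simpa using this
      have := congrFun h1' 0
      norm_num at this
    have hρpos : 0 < ρ := by nlinarith
    -- unbounded growth contradiction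
    obtain ⟨i, hi⟩ := pow_unbounded_of_one_lt C (by norm_num : (1:ℝ) < 4001/16)
    have hb := hbound x₀ (4 * i)
    rw [hnorm i] at hb
    have hρpow : ρ ^ (4 * i) ≤ 1 := pow_le_one₀ hρpos.le hρ.le
    have : ((4001:ℝ)/16) ^ i * ‖x₀‖ ≤ C * ‖x₀‖ := by nlinarith [pow_pos hρpos (4*i)]
    have : ((4001:ℝ)/16) ^ i ≤ C := by
      have := (mul_le_mul_iff_of_pos_right hx₀pos).mp this
      linarith
    linarith
end

section
/- ((m,K)-weak stability for non-global exponential stability.) Let Σ be a set, σ : ℕ₀ → Σ, ρ : Σ → [0,∞), and define π_k := ∏_{i=0}^{k−1} ρ_{σ_i} (empty product = 1). Let α ≥ 1, α̃ ≥ 1, ρ̃ ∈ (0,1] with π_k ≤ α̃ ρ̃^k for all k ∈ ℕ₀, and let r₀ > 0. Let x : ℕ₀ → ℝⁿ satisfy |x_0| ≤ r₀ (α α̃)^{-1} and the conditional abstraction step: for every k ∈ ℕ₀, if |x_j| ≤ r₀ for all j ∈ {0,…,k}, then |x_{k+1}| ≤ α π_{k+1} |x_0|. Then for every k ∈ ℕ₀: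 |x_k| ≤ α α̃ ρ̃^k |x_0| ≤ r₀. -/
/-- `(m,K)`-weak stability for non-global exponential stability: with
`π_k = ∏_{i<k} ρ_{σ_i} ≤ α̃ ρ̃^k` (`α, α̃ ≥ 1`, `ρ̃ ∈ (0,1]`), initial condition
`|x_0| ≤ r₀ (α α̃)⁻¹`, and the conditional abstraction step (valid while the trajectory
stays in the ball of radius `r₀`), one has `|x_k| ≤ α α̃ ρ̃^k |x_0| ≤ r₀` for all `k`. -/
theorem stmt18 {n : ℕ} {S : Type*} (σ : ℕ → S) (ρ : S → ℝ) (hρ : ∀ s, 0 ≤ ρ s)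
    (α αt ρt r₀ : ℝ) (hα : 1 ≤ α) (hαt : 1 ≤ αt) (hρt0 : 0 < ρt) (hρt1 : ρt ≤ 1)
    (hκ : ∀ k, (∏ i ∈ Finset.range k, ρ (σ i)) ≤ αt * ρt ^ k)
    (hr : 0 < r₀)
    (x : ℕ → EuclideanSpace ℝ (Fin n))
    (hx0 : ‖x 0‖ ≤ r₀ * (α * αt)⁻¹)
    (hstep : ∀ k, (∀ j, j ≤ k → ‖x j‖ ≤ r₀) →
      ‖x (k + 1)‖ ≤ α * (∏ i ∈ Finset.range (k + 1), ρ (σ i)) * ‖x 0‖) :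
    ∀ k, ‖x k‖ ≤ α * αt * ρt ^ k * ‖x 0‖ ∧ α * αt * ρt ^ k * ‖x 0‖ ≤ r₀ := by
  have hαα : (0:ℝ) < α * αt := by positivity
  have hαα1 : (1:ℝ) ≤ α * αt := by nlinarith
  have hpow : ∀ k, ρt ^ k ≤ 1 := fun k => pow_le_one₀ hρt0.le hρt1
  have hx0' : α * αt * ‖x 0‖ ≤ r₀ := by
    have := mul_le_mul_of_nonneg_left hx0 hαα.le
    have h2 : α * αt * (r₀ * (α * αt)⁻¹) = r₀ := by field_simp
    linarith
  have hsec : ∀ k, α * αt * ρt ^ k * ‖x 0‖ ≤ r₀ := by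
    intro k
    calc α * αt * ρt ^ k * ‖x 0‖ ≤ α * αt * 1 * ‖x 0‖ := by
          apply mul_le_mul_of_nonneg_right _ (norm_nonneg _)
          exact mul_le_mul_of_nonneg_left (hpow k) hαα.le
      _ = α * αt * ‖x 0‖ := by ring
      _ ≤ r₀ := hx0'
  have hfirst : ∀ k, ‖x k‖ ≤ α * αt * ρt ^ k * ‖x 0‖ := by
    intro k
    induction k using Nat.strong_induction_on with
    | _ k ih =>
      match k with
      | 0 =>
        simpa using le_mul_of_one_le_left (norm_nonneg _) (by simpa using hαα1)
      | k + 1 =>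
        have hin : ∀ j, j ≤ k → ‖x j‖ ≤ r₀ := fun j hj =>
          (ih j (Nat.lt_succ_of_le hj)).trans (hsec j)
        calc ‖x (k+1)‖ ≤ α * (∏ i ∈ Finset.range (k + 1), ρ (σ i)) * ‖x 0‖ := hstep k hin
          _ ≤ α * (αt * ρt ^ (k+1)) * ‖x 0‖ := by
              apply mul_le_mul_of_nonneg_right _ (norm_nonneg _)
              exact mul_le_mul_of_nonneg_left (hκ (k+1)) (by linarith)
          _ = α * αt * ρt ^ (k+1) * ‖x 0‖ := by ring
  exact fun k => ⟨hfirst k, hsec k⟩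
end
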